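/- A vector (d29,…,d46) ∈ ℝ^18 lies in the range of the linear map M_E if and only if the following six linear relations hold: (i) d32+d36−d33−d46−d44−d39+d37+d41 = 0; (ii) d32+d36−d33−2d44+d40−d39+d37−d31+d29+d43−d46 = 0; (iii) d32−d33−2d44+d40−d39+d37+d35−d31+d29+d42−d45 = 0; (iv) d36+2d32−d33−2d44+d40−d39+d37−d34 = 0; (v) d42+2d29−d30+d40−2d44−d39+d37−d31 = 0; (vi) d38+d40−d39−d44−d31+d29+d42−d45 = 0. -/
import Mathlib

noncomputable section

/-- The coefficient matrix `M_E` of the type-E divergence system: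
rows are `d29,…,d46`, columns are `c39,…,c53`. -/
def ME : Matrix (Fin 18) (Fin 15) ℝ :=
  !![0, 0, 0, 1, 0, 0, 0, 0, 0, 1, 0, 0, 0, 0, 0;
    0, 1, 0, 1, 0, 0, 0, 0, 0, 0, 0, 0, 1, 0, 0;
    0, 0, 0, 1, 0, 0, 0, 0, 1, 0, 0, 0, 0, 1, 0;
    0, 0, 0, 0, 1, 0, 0, 0, 0, 1, 0, 0, 0, 0, 0;
    0, 0, 0, 0, 1, 1, 0, 0, 0, 0, 0, 0, 1, 0, 0;
    0, 0, 1, 0, 1, 0, 0, 0, 0, 0, 0, 0, 0, 1, 0;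
    0, 0, 0, 0, 0, 1, 0, 0, 0, 0, 1, 0, 0, 0, 0;
    0, 0, 1, 0, 0, 1, 0, 0, 0, 0, 0, 0, 0, 0, 1;
    1, 0, 0, 0, 0, 0, 1, 0, 0, 0, 0, 0, 1, 0, 0;
    0, 0, 0, 0, 0, 0, 1, 0, 0, 0, 1, 0, 0, 0, 0;
    0, 0, 0, 0, 0, 0, 1, 1, 0, 0, 0, 0, 0, 0, 1;
    1, 0, 0, 0, 0, 0, 0, 1, 0, 0, 0, 0, 0, 1, 0;
    0, 0, 0, 0, 0, 0, 0, 1, 0, 0, 0, 1, 0, 0, 0;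
    0, 1, 0, 0, 0, 0, 0, 0, 1, 0, 0, 0, 0, 0, 1;
    0, 0, 0, 0, 0, 0, 0, 0, 1, 0, 0, 1, 0, 0, 0;
    1, 0, 0, 0, 0, 0, 0, 0, 0, 1, 0, 0, 0, 0, 0;
    0, 1, 0, 0, 0, 0, 0, 0, 0, 0, 1, 0, 0, 0, 0;
    0, 0, 1, 0, 0, 0, 0, 0, 0, 0, 0, 1, 0, 0, 0]

set_option maxHeartbeats 1000000 in
lemma ME_mulVec (c0 c1 c2 c3 c4 c5 c6 c7 c8 c9 c10 c11 c12 c13 c14 : ℝ) :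
    ME.mulVec ![c0, c1, c2, c3, c4, c5, c6, c7, c8, c9, c10, c11, c12, c13, c14] =
    ![c3 + c9,
      c1 + c3 + c12,
      c3 + c8 + c13,
      c4 + c9,
      c4 + c5 + c12,
      c2 + c4 + c13,
      c5 + c10,
      c2 + c5 + c14,
      c0 + c6 + c12,
      c6 + c10,
      c6 + c7 + c14,
      c0 + c7 + c13,
      c7 + c11,
      c1 + c8 + c14,
      c8 + c11,
      c0 + c9,
      c1 + c10,
      c2 + c11] := by
  funext i
  fin_cases i <;>
    simp only [ME, Matrix.mulVec, dotProduct, Fin.sum_univ_succ, Fin.sum_univ_zero,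
      Matrix.cons_val_zero, Matrix.cons_val_succ, Matrix.cons_val_zero', Matrix.cons_val_succ',
      Matrix.of_apply, Matrix.cons_val', Matrix.empty_val', Matrix.cons_val_fin_one,
      Matrix.cons_val_one, Matrix.head_cons, Matrix.head_fin_const] <;> ring



/-- A vector `d = (d29,…,d46) ∈ ℝ^18` lies in the range of `M_E` if and only if
the six linear relations (i)–(vi) hold. -/
theorem ME_range_iff :
    ∀ d : Fin 18 → ℝ,
      d ∈ Set.range ME.mulVec ↔
        (d 3 + d 7 - d 4 - d 17 - d 15 - d 10 + d 8 + d 12 = 0 ∧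
         d 3 + d 7 - d 4 - 2 * d 15 + d 11 - d 10 + d 8 - d 2 + d 0 + d 14 - d 17 = 0 ∧
         d 3 - d 4 - 2 * d 15 + d 11 - d 10 + d 8 + d 6 - d 2 + d 0 + d 13 - d 16 = 0 ∧
         d 7 + 2 * d 3 - d 4 - 2 * d 15 + d 11 - d 10 + d 8 - d 5 = 0 ∧
         d 13 + 2 * d 0 - d 1 + d 11 - 2 * d 15 - d 10 + d 8 - d 2 = 0 ∧
         d 9 + d 11 - d 10 - d 15 - d 2 + d 0 + d 13 - d 16 = 0) := by
  intro d
  constructor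
  · rintro ⟨c, rfl⟩
    rw [show c = ![c 0, c 1, c 2, c 3, c 4, c 5, c 6, c 7, c 8, c 9, c 10, c 11, c 12, c 13, c 14] from funext fun i => by fin_cases i <;> rfl, ME_mulVec]
    exact ⟨show (c 4 + c 9) + (c 2 + c 5 + c 14) - (c 4 + c 5 + c 12) - (c 2 + c 11) - (c 0 + c 9) - (c 6 + c 7 + c 14) + (c 0 + c 6 + c 12) + (c 7 + c 11) = 0 by ring,
      show (c 4 + c 9) + (c 2 + c 5 + c 14) - (c 4 + c 5 + c 12) - 2 * (c 0 + c 9) + (c 0 + c 7 + c 13) - (c 6 + c 7 + c 14) + (c 0 + c 6 + c 12) - (c 3 + c 8 + c 13) + (c 3 + c 9) + (c 8 + c 11) - (c 2 + c 11) = 0 by ring,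
      show (c 4 + c 9) - (c 4 + c 5 + c 12) - 2 * (c 0 + c 9) + (c 0 + c 7 + c 13) - (c 6 + c 7 + c 14) + (c 0 + c 6 + c 12) + (c 5 + c 10) - (c 3 + c 8 + c 13) + (c 3 + c 9) + (c 1 + c 8 + c 14) - (c 1 + c 10) = 0 by ring,
      show (c 2 + c 5 + c 14) + 2 * (c 4 + c 9) - (c 4 + c 5 + c 12) - 2 * (c 0 + c 9) + (c 0 + c 7 + c 13) - (c 6 + c 7 + c 14) + (c 0 + c 6 + c 12) - (c 2 + c 4 + c 13) = 0 by ring,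
      show (c 1 + c 8 + c 14) + 2 * (c 3 + c 9) - (c 1 + c 3 + c 12) + (c 0 + c 7 + c 13) - 2 * (c 0 + c 9) - (c 6 + c 7 + c 14) + (c 0 + c 6 + c 12) - (c 3 + c 8 + c 13) = 0 by ring,
      show (c 6 + c 10) + (c 0 + c 7 + c 13) - (c 6 + c 7 + c 14) - (c 0 + c 9) - (c 3 + c 8 + c 13) + (c 3 + c 9) + (c 1 + c 8 + c 14) - (c 1 + c 10) = 0 by ring⟩
  · rintro ⟨h1, h2, h3, h4, h5, h6⟩
    refine ⟨![(-d 4/2 + d 5/2 + d 6 - d 7/2 + d 8 - d 9),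
      (-d 0 + d 1 + d 3 - d 4/2 - d 5/2 + d 7/2),
      (-d 4/2 + d 5/2 + d 7/2),
      (d 0 - d 3 + d 4/2 + d 5/2 - d 7/2),
      (d 4/2 + d 5/2 - d 7/2),
      (d 4/2 - d 5/2 + d 7/2),
      (d 4/2 - d 5/2 - d 6 + d 7/2 + d 9),
      (-d 4/2 + d 5/2 + d 6 - d 7/2 - d 9 + d 10),
      (-d 0 + d 2 + d 3 - d 4/2 - d 5/2 + d 7/2),
      (d 3 - d 4/2 - d 5/2 + d 7/2),
      (-d 4/2 + d 5/2 + d 6 - d 7/2),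
      (d 4/2 - d 5/2 - d 6 + d 7/2 + d 9 - d 10 + d 12),
      (0),
      (0),
      (0)], ?_⟩
    rw [ME_mulVec]
    funext i
    fin_cases i
    · exact show (d 0 - d 3 + d 4/2 + d 5/2 - d 7/2) + (d 3 - d 4/2 - d 5/2 + d 7/2) = d 0 by linear_combination (0:ℝ)
    · exact show (-d 0 + d 1 + d 3 - d 4/2 - d 5/2 + d 7/2) + (d 0 - d 3 + d 4/2 + d 5/2 - d 7/2) + (0) = d 1 by linear_combination (0:ℝ)
    · exact show (d 0 - d 3 + d 4/2 + d 5/2 - d 7/2) + (-d 0 + d 2 + d 3 - d 4/2 - d 5/2 + d 7/2) + (0) = d 2 by linear_combination (0:ℝ)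
    · exact show (d 4/2 + d 5/2 - d 7/2) + (d 3 - d 4/2 - d 5/2 + d 7/2) = d 3 by linear_combination (0:ℝ)
    · exact show (d 4/2 + d 5/2 - d 7/2) + (d 4/2 - d 5/2 + d 7/2) + (0) = d 4 by linear_combination (0:ℝ)
    · exact show (-d 4/2 + d 5/2 + d 7/2) + (d 4/2 + d 5/2 - d 7/2) + (0) = d 5 by linear_combination (0:ℝ)
    · exact show (d 4/2 - d 5/2 + d 7/2) + (-d 4/2 + d 5/2 + d 6 - d 7/2) = d 6 by linear_combination (0:ℝ)
    · exact show (-d 4/2 + d 5/2 + d 7/2) + (d 4/2 - d 5/2 + d 7/2) + (0) = d 7 by linear_combination (0:ℝ)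
    · exact show (-d 4/2 + d 5/2 + d 6 - d 7/2 + d 8 - d 9) + (d 4/2 - d 5/2 - d 6 + d 7/2 + d 9) + (0) = d 8 by linear_combination (0:ℝ)
    · exact show (d 4/2 - d 5/2 - d 6 + d 7/2 + d 9) + (-d 4/2 + d 5/2 + d 6 - d 7/2) = d 9 by linear_combination (0:ℝ)
    · exact show (d 4/2 - d 5/2 - d 6 + d 7/2 + d 9) + (-d 4/2 + d 5/2 + d 6 - d 7/2 - d 9 + d 10) + (0) = d 10 by linear_combination (0:ℝ)
    · exact show (-d 4/2 + d 5/2 + d 6 - d 7/2 + d 8 - d 9) + (-d 4/2 + d 5/2 + d 6 - d 7/2 - d 9 + d 10) + (0) = d 11 by linear_combination 2*h3 - h4 - 2*h6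
    · exact show (-d 4/2 + d 5/2 + d 6 - d 7/2 - d 9 + d 10) + (d 4/2 - d 5/2 - d 6 + d 7/2 + d 9 - d 10 + d 12) = d 12 by linear_combination (0:ℝ)
    · exact show (-d 0 + d 1 + d 3 - d 4/2 - d 5/2 + d 7/2) + (-d 0 + d 2 + d 3 - d 4/2 - d 5/2 + d 7/2) + (0) = d 13 by linear_combination h4 - h5
    · exact show (-d 0 + d 2 + d 3 - d 4/2 - d 5/2 + d 7/2) + (d 4/2 - d 5/2 - d 6 + d 7/2 + d 9 - d 10 + d 12) = d 14 by linear_combination h1 - h2 - h3 + h4 + h6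
    · exact show (-d 4/2 + d 5/2 + d 6 - d 7/2 + d 8 - d 9) + (d 3 - d 4/2 - d 5/2 + d 7/2) = d 15 by linear_combination h3 - h6
    · exact show (-d 0 + d 1 + d 3 - d 4/2 - d 5/2 + d 7/2) + (-d 4/2 + d 5/2 + d 6 - d 7/2) = d 16 by linear_combination h3 - h5
    · exact show (-d 4/2 + d 5/2 + d 7/2) + (d 4/2 - d 5/2 - d 6 + d 7/2 + d 9 - d 10 + d 12) = d 17 by linear_combination h1 - h3 + h6
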